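/- For all positive reals a, b: C(a,b) − N(a,b) ≤ (7/9)(C(a,b) − G(a,b)); equivalently (2C(a,b) + 7G(a,b))/9 ≤ N(a,b). -/

import Mathlib

noncomputable def meanA (a b : ℝ) : ℝ := (a + b) / 2
noncomputable def meanG (a b : ℝ) : ℝ := Real.sqrt (a * b)
noncomputable def meanH (a b : ℝ) : ℝ := 2 * a * b / (a + b)
noncomputable def meanN (a b : ℝ) : ℝ := (a + Real.sqrt (a * b) + b) / 3
noncomputable def meanC (a b : ℝ) : ℝ := (a ^ 2 + b ^ 2) / (a + b)
noncomputable def meanS (a b : ℝ) : ℝ := Real.sqrt ((a ^ 2 + b ^ 2) / 2)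
noncomputable def meanR (a b : ℝ) : ℝ := 2 * (a ^ 2 + a * b + b ^ 2) / (3 * (a + b))
noncomputable def triDelta (a b : ℝ) : ℝ := (a - b) ^ 2 / (a + b)
noncomputable def hellinger (a b : ℝ) : ℝ := (Real.sqrt a - Real.sqrt b) ^ 2 / 2

theorem stmt_14 (a b : ℝ) (ha : 0 < a) (hb : 0 < b) :
    meanC a b - meanN a b ≤ (7 / 9) * (meanC a b - meanG a b) := by
  unfold meanC meanN meanG
  have hab : 0 < a + b := by linarith
  set g := Real.sqrt (a * b) with hg
  have hg2 : g ^ 2 = a * b := Real.sq_sqrt (by positivity)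
  have hg0 : 0 ≤ g := Real.sqrt_nonneg _
  rw [div_sub' hab.ne', div_le_iff₀ hab]

  have hdiv : (a ^ 2 + b ^ 2) / (a + b) * (a + b) = a ^ 2 + b ^ 2 := div_mul_cancel₀ _ hab.ne'
  nlinarith [sq_nonneg (a + b - 2 * g), mul_pos hab hab, hdiv]
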